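/- Let F : A → B be an additive functor between abelian categories which admits a right adjoint U : B → A that is exact, and let M = UF be the monad on A defined by this adjoint pair. Then the comparison functor K : B → M-Mod_A is an equivalence of categories if and only if the functor U is faithful. -/

import Mathlib

universe v₁ v₂ u₁ u₂
namespace CategoryTheory

namespace Monad2
open Monad

open Limits

noncomputable section

-- Hide the implementation details in this namespace.
namespace MonadicityInternal2

variable {C : Type u₁} {D : Type u₂}
variable [Category.{v₁} C] [Category.{v₂} D]
variable {G : D ⥤ C} {F : C ⥤ D} (adj : F ⊣ G)

/-- The "main pair" for an algebra `(A, α)` is the pair of morphisms `(F α, ε_FA)`. It is always a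
reflexive pair, and will be used to construct the left adjoint to the comparison functor and show it
is an equivalence.
-/
instance main_pair_reflexive (A : adj.toMonad.Algebra) :
    IsReflexivePair (F.map A.a) (adj.counit.app (F.obj A.A)) := by
  apply IsReflexivePair.mk' (F.map (adj.unit.app _)) _ _
  · exact (F.map_comp _ _).symm.trans ((congr_arg F.map A.unit).trans (F.map_id _))
  · exact adj.left_triangle_components _

/-- The "main pair" for an algebra `(A, α)` is the pair of morphisms `(F α, ε_FA)`. It is always a
`G`-split pair, and will be used to construct the left adjoint to the comparison functor and show it
is an equivalence.
-/
instance main_pair_G_split (A : adj.toMonad.Algebra) :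
    G.IsSplitPair (F.map A.a)
      (adj.counit.app (F.obj A.A)) where
  splittable := ⟨_, _, ⟨beckSplitCoequalizer A⟩⟩

/-- The object function for the left adjoint to the comparison functor. -/
def comparisonLeftAdjointObj (A : adj.toMonad.Algebra)
    [HasCoequalizer (F.map A.a) (adj.counit.app _)] : D :=
  coequalizer (F.map A.a) (adj.counit.app _)

/-
The new unused variable linter in
https://github.com/leanprover/lean4/pull/5338
flags `{ f : F.obj A.A ⟶ B // _ }`.
-/
set_option linter.unusedVariables false in
/--
We have a bijection of homsets which will be used to construct the left adjoint to the comparison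
functor.
-/
@[simps!]
def comparisonLeftAdjointHomEquiv (A : adj.toMonad.Algebra) (B : D)
    [HasCoequalizer (F.map A.a) (adj.counit.app (F.obj A.A))] :
    (comparisonLeftAdjointObj adj A ⟶ B) ≃ (A ⟶ (comparison adj).obj B) :=
  calc
    (comparisonLeftAdjointObj adj A ⟶ B) ≃ { f : F.obj A.A ⟶ B // _ } :=
      Cofork.IsColimit.homIso (colimit.isColimit _) B
    _ ≃ { g : A.A ⟶ G.obj B // G.map (F.map g) ≫ G.map (adj.counit.app B) = A.a ≫ g } := by
      refine (adj.homEquiv _ _).subtypeEquiv ?_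
      intro f
      rw [← (adj.homEquiv _ _).injective.eq_iff, Adjunction.homEquiv_naturality_left,
        adj.homEquiv_unit, adj.homEquiv_unit]
      erw [G.map_comp]
      dsimp
      erw [adj.right_triangle_components_assoc, ← G.map_comp, F.map_comp, Category.assoc,
        adj.counit_naturality, adj.left_triangle_components_assoc]
      apply eq_comm
    _ ≃ (A ⟶ (comparison adj).obj B) :=
      { toFun := fun g =>
          { f := _
            h := g.prop }
        invFun := fun f => ⟨f.f, f.h⟩
        left_inv := fun g => by ext; rfl
        right_inv := fun f => by ext; rfl }

/-- Construct the adjunction to the comparison functor.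
-/
def leftAdjointComparison
    [∀ A : adj.toMonad.Algebra, HasCoequalizer (F.map A.a)
      (adj.counit.app (F.obj A.A))] :
    adj.toMonad.Algebra ⥤ D := by
  refine
    Adjunction.leftAdjointOfEquiv (G := comparison adj)
      (F_obj := fun A => comparisonLeftAdjointObj adj A) (fun A B => ?_) ?_
  · apply comparisonLeftAdjointHomEquiv
  · intro A B B' g h
    ext1
    -- Porting note: the goal was previously closed by the following, which succeeds until
    -- `Category.assoc`.
    -- dsimp [comparisonLeftAdjointHomEquiv]
    -- rw [← adj.homEquiv_naturality_right, Category.assoc]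
    exact (congrArg (adj.homEquiv _ _) (Category.assoc _ _ _).symm).trans (adj.homEquiv_naturality_right _ _)

/-- Provided we have the appropriate coequalizers, we have an adjunction to the comparison functor.
-/
@[simps! counit]
def comparisonAdjunction
    [∀ A : adj.toMonad.Algebra, HasCoequalizer (F.map A.a)
      (adj.counit.app (F.obj A.A))] :
    leftAdjointComparison adj ⊣ comparison adj :=
  Adjunction.adjunctionOfEquivLeft _ _

variable {adj}

theorem comparisonAdjunction_unit_f_aux
    [∀ A : adj.toMonad.Algebra, HasCoequalizer (F.map A.a)
      (adj.counit.app (F.obj A.A))]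
    (A : adj.toMonad.Algebra) :
    ((comparisonAdjunction adj).unit.app A).f =
      adj.homEquiv A.A _
        (coequalizer.π (F.map A.a) (adj.counit.app (F.obj A.A))) :=
  congr_arg (adj.homEquiv _ _) (Category.comp_id _)

/-- This is a cofork which is helpful for establishing monadicity: the morphism from the Beck
coequalizer to this cofork is the unit for the adjunction on the comparison functor.
-/
@[simps! pt]
def unitCofork (A : adj.toMonad.Algebra)
    [HasCoequalizer (F.map A.a) (adj.counit.app (F.obj A.A))] :
    Cofork (G.map (F.map A.a)) (G.map (adj.counit.app (F.obj A.A))) :=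
  Cofork.ofπ (G.map (coequalizer.π (F.map A.a) (adj.counit.app (F.obj A.A))))
    (by
      change _ = G.map _ ≫ _
      exact (G.map_comp _ _).symm.trans ((congr_arg G.map (coequalizer.condition (F.map A.a) (adj.counit.app (F.obj A.A)))).trans (G.map_comp _ _)))

@[simp]
theorem unitCofork_π (A : adj.toMonad.Algebra)
    [HasCoequalizer (F.map A.a) (adj.counit.app (F.obj A.A))] :
    (unitCofork A).π = G.map (coequalizer.π (F.map A.a) (adj.counit.app (F.obj A.A))) :=
  rfl

theorem comparisonAdjunction_unit_f
    [∀ A : adj.toMonad.Algebra, HasCoequalizer (F.map A.a)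
      (adj.counit.app (F.obj A.A))]
    (A : adj.toMonad.Algebra) :
    ((comparisonAdjunction adj).unit.app A).f = (beckCoequalizer A).desc (unitCofork A) := by
  apply Limits.Cofork.IsColimit.hom_ext (beckCoequalizer A)
  erw [Cofork.IsColimit.π_desc]
  dsimp only [beckCofork_π, unitCofork_π]
  erw [comparisonAdjunction_unit_f_aux, ← adj.homEquiv_naturality_left A.a, coequalizer.condition,
    adj.homEquiv_naturality_right, adj.homEquiv_unit, Category.assoc]
  apply adj.right_triangle_components_assoc

variable (adj)

/-- The cofork which describes the counit of the adjunction: the morphism from the coequalizer of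
this pair to this morphism is the counit.
-/
@[simps!]
def counitCofork (B : D) :
    Cofork (F.map (G.map (adj.counit.app B)))
      (adj.counit.app (F.obj (G.obj B))) :=
  Cofork.ofπ (adj.counit.app B) (adj.counit_naturality _)

variable {adj} in
/-- The unit cofork is a colimit provided `G` preserves it. -/
def unitColimitOfPreservesCoequalizer (A : adj.toMonad.Algebra)
    [HasCoequalizer (F.map A.a) (adj.counit.app (F.obj A.A))]
    [PreservesColimit (parallelPair (F.map A.a) (adj.counit.app (F.obj A.A))) G] :
    IsColimit (unitCofork (G := G) A) :=
  isColimitOfHasCoequalizerOfPreservesColimit G _ _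

/-- The counit cofork is a colimit provided `G` reflects it. -/
def counitCoequalizerOfReflectsCoequalizer (B : D)
    [ReflectsColimit (parallelPair (F.map (G.map (adj.counit.app B)))
      (adj.counit.app (F.obj (G.obj B)))) G] :
    IsColimit (counitCofork (adj := adj) B) :=
  isColimitOfIsColimitCoforkMap G _ (beckCoequalizer ((comparison adj).obj B))

-- Porting note: Lean 3 didn't seem to need this
instance
    [∀ A : adj.toMonad.Algebra, HasCoequalizer (F.map A.a) (adj.counit.app (F.obj A.A))]
    (B : D) : HasColimit (parallelPair
      (F.map (G.map (NatTrans.app adj.counit B)))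
      (NatTrans.app adj.counit (F.obj (G.obj B)))) :=
  inferInstanceAs <| HasCoequalizer
    (F.map ((comparison adj).obj B).a)
    (adj.counit.app (F.obj ((comparison adj).obj B).A))

theorem comparisonAdjunction_counit_app
    [∀ A : adj.toMonad.Algebra, HasCoequalizer (F.map A.a) (adj.counit.app (F.obj A.A))] (B : D) :
    (comparisonAdjunction adj).counit.app B = colimit.desc _ (counitCofork adj B) := by
  apply coequalizer.hom_ext
  simp [comparisonAdjunction, Trans.trans, Cofork.IsColimit.homIso]
  refine ((Cofork.IsColimit.desc' _ _ _).2).trans ?_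
  erw [colimit.ι_desc]
  show (adj.homEquiv (G.obj B) B).symm (𝟙 _) = _
  simp [Adjunction.homEquiv_counit]

end MonadicityInternal2

open CategoryTheory Adjunction Monad MonadicityInternal2

variable {C : Type u₁} {D : Type u₂}
variable [Category.{v₁} C] [Category.{v₂} D]
variable {G : D ⥤ C} {F : C ⥤ D} (adj : F ⊣ G)

variable (G) in
/--
If `G` is monadic, it creates colimits of `G`-split pairs. This is the "boring" direction of Beck's
monadicity theorem, the converse is given in `monadicOfCreatesGSplitCoequalizers`.
-/
def createsGSplitCoequalizersOfMonadic [MonadicRightAdjoint G] ⦃A B⦄ (f g : A ⟶ B)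
    [G.IsSplitPair f g] : CreatesColimit (parallelPair f g) G := by
  apply (config := {allowSynthFailures := true}) monadicCreatesColimitOfPreservesColimit
    -- Porting note: oddly (config := {allowSynthFailures := true}) had no effect here and below
  all_goals
    apply @preservesColimit_of_iso_diagram _ _ _ _ _ _ _ _ _ (diagramIsoParallelPair.{v₁} _).symm ?_
    dsimp
    infer_instance

section BeckMonadicity

-- Porting note: added these to replace parametric instances https://github.com/leanprover/lean4/issues/2311
-- When this is fixed the proofs below that struggle with instances should be reviewed.
-- [∀ ⦃A B⦄ (f g : A ⟶ B) [G.IsSplitPair f g], HasCoequalizer f g]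
class HasCoequalizerOfIsSplitPair (G : D ⥤ C) : Prop where
  out : ∀ {A B} (f g : A ⟶ B) [G.IsSplitPair f g], HasCoequalizer f g

-- Porting note: cannot find synth order
-- instance {A B} (f g : A ⟶ B) [G.IsSplitPair f g] [HasCoequalizerOfIsSplitPair G] :
--     HasCoequalizer f g := HasCoequalizerOfIsSplitPair.out f g

instance [HasCoequalizerOfIsSplitPair G] : ∀ (A : Algebra adj.toMonad),
    HasCoequalizer (F.map A.a)
      (adj.counit.app (F.obj A.A)) :=
  fun _ => HasCoequalizerOfIsSplitPair.out G _ _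

-- Porting note: added these to replace parametric instances https://github.com/leanprover/lean4/issues/2311
-- [∀ ⦃A B⦄ (f g : A ⟶ B) [G.IsSplitPair f g], PreservesColimit (parallelPair f g) G]
class PreservesColimitOfIsSplitPair (G : D ⥤ C) where
  out : ∀ {A B} (f g : A ⟶ B) [G.IsSplitPair f g], PreservesColimit (parallelPair f g) G

instance {A B} (f g : A ⟶ B) [G.IsSplitPair f g] [PreservesColimitOfIsSplitPair G] :
    PreservesColimit (parallelPair f g) G := PreservesColimitOfIsSplitPair.out f g

instance [PreservesColimitOfIsSplitPair G] : ∀ (A : Algebra adj.toMonad),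
   PreservesColimit (parallelPair (F.map A.a)
      (NatTrans.app adj.counit (F.obj A.A))) G :=
  fun _ => PreservesColimitOfIsSplitPair.out _ _

-- Porting note: added these to replace parametric instances https://github.com/leanprover/lean4/issues/2311
-- [∀ ⦃A B⦄ (f g : A ⟶ B) [G.IsSplitPair f g], ReflectsColimit (parallelPair f g) G] :
class ReflectsColimitOfIsSplitPair (G : D ⥤ C) where
  out : ∀ {A B} (f g : A ⟶ B) [G.IsSplitPair f g], ReflectsColimit (parallelPair f g) G

instance {A B} (f g : A ⟶ B) [G.IsSplitPair f g] [ReflectsColimitOfIsSplitPair G] :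
    ReflectsColimit (parallelPair f g) G := ReflectsColimitOfIsSplitPair.out f g

instance [ReflectsColimitOfIsSplitPair G] : ∀ (A : Algebra adj.toMonad),
    ReflectsColimit (parallelPair (F.map A.a)
      (NatTrans.app adj.counit (F.obj A.A))) G :=
  fun _ => ReflectsColimitOfIsSplitPair.out _ _

/-- To show `G` is a monadic right adjoint, we can show it preserves and reflects `G`-split
coequalizers, and `D` has them.
-/
def monadicOfHasPreservesReflectsGSplitCoequalizers [HasCoequalizerOfIsSplitPair G]
    [PreservesColimitOfIsSplitPair G] [ReflectsColimitOfIsSplitPair G] :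
    MonadicRightAdjoint G where
  L := F
  adj := adj
  eqv := by
    have : ∀ (X : Algebra adj.toMonad), IsIso ((comparisonAdjunction adj).unit.app X) := by
      intro X
      apply @isIso_of_reflects_iso _ _ _ _ _ _ _ (Monad.forget adj.toMonad) ?_ _
      · change IsIso ((comparisonAdjunction adj).unit.app X).f
        rw [comparisonAdjunction_unit_f]
        change
          IsIso
            (IsColimit.coconePointUniqueUpToIso (beckCoequalizer X)
                (unitColimitOfPreservesCoequalizer X)).hom
        exact (IsColimit.coconePointUniqueUpToIso _ _).isIso_hom
    have : ∀ (Y : D), IsIso ((comparisonAdjunction adj).counit.app Y) := by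
      intro Y
      rw [comparisonAdjunction_counit_app]
      -- Porting note: passing instances through
      change IsIso (IsColimit.coconePointUniqueUpToIso _ ?_).hom
      infer_instance
      -- Porting note: passing instances through
      apply @counitCoequalizerOfReflectsCoequalizer _ _ _ _ _ _ _ _ ?_
      letI _ :
        G.IsSplitPair (F.map (G.map (adj.counit.app Y)))
          (adj.counit.app (F.obj (G.obj Y))) :=
        MonadicityInternal2.main_pair_G_split _ ((comparison adj).obj Y)
      infer_instance
    exact (comparisonAdjunction adj).toEquivalence.isEquivalence_inverse

-- Porting note: added these to replace parametric instances https://github.com/leanprover/lean4/issues/2311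
-- [∀ ⦃A B⦄ (f g : A ⟶ B) [G.IsSplitPair f g], CreatesColimit (parallelPair f g) G] :
class CreatesColimitOfIsSplitPair (G : D ⥤ C) where
  out : ∀ {A B} (f g : A ⟶ B) [G.IsSplitPair f g], CreatesColimit (parallelPair f g) G

instance {A B} (f g : A ⟶ B) [G.IsSplitPair f g] [CreatesColimitOfIsSplitPair G] :
    CreatesColimit (parallelPair f g) G := CreatesColimitOfIsSplitPair.out f g

instance [CreatesColimitOfIsSplitPair G] : ∀ (A : Algebra adj.toMonad),
    CreatesColimit (parallelPair (F.map A.a)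
      (NatTrans.app adj.counit (F.obj A.A))) G :=
  fun _ => CreatesColimitOfIsSplitPair.out _ _

/--
Beck's monadicity theorem. If `G` has a left adjoint and creates coequalizers of `G`-split pairs,
then it is monadic.
This is the converse of `createsGSplitCoequalizersOfMonadic`.
-/
def monadicOfCreatesGSplitCoequalizers [CreatesColimitOfIsSplitPair G] :
    MonadicRightAdjoint G := by
  let I {A B} (f g : A ⟶ B) [G.IsSplitPair f g] : HasColimit (parallelPair f g ⋙ G) := by
    apply @hasColimit_of_iso _ _ _ _ _ _ ?_ (diagramIsoParallelPair.{v₁} _)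
    exact inferInstanceAs <| HasCoequalizer (G.map f) (G.map g)
  have : HasCoequalizerOfIsSplitPair G := ⟨fun _ _ => hasColimit_of_created (parallelPair _ _) G⟩
  have : PreservesColimitOfIsSplitPair G := ⟨by intros; infer_instance⟩
  have : ReflectsColimitOfIsSplitPair G := ⟨by intros; infer_instance⟩
  exact monadicOfHasPreservesReflectsGSplitCoequalizers adj

/-- An alternate version of Beck's monadicity theorem. If `G` reflects isomorphisms, preserves
coequalizers of `G`-split pairs and `C` has coequalizers of `G`-split pairs, then it is monadic.
-/
def monadicOfHasPreservesGSplitCoequalizersOfReflectsIsomorphisms [G.ReflectsIsomorphisms]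
    [HasCoequalizerOfIsSplitPair G] [PreservesColimitOfIsSplitPair G] :
    MonadicRightAdjoint G := by
  have : ReflectsColimitOfIsSplitPair G := ⟨fun f g _ => by
    have := HasCoequalizerOfIsSplitPair.out G f g
    apply reflectsColimit_of_reflectsIsomorphisms⟩
  apply monadicOfHasPreservesReflectsGSplitCoequalizers adj

end BeckMonadicity

section ReflexiveMonadicity

variable [HasReflexiveCoequalizers D] [G.ReflectsIsomorphisms]

-- Porting note: added these to replace parametric instances https://github.com/leanprover/lean4/issues/2311
-- [∀ ⦃A B⦄ (f g : A ⟶ B) [G.IsReflexivePair f g], PreservesColimit (parallelPair f g) G] :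
class PreservesColimitOfIsReflexivePair (G : C ⥤ D) where
  out : ∀ ⦃A B⦄ (f g : A ⟶ B) [IsReflexivePair f g], PreservesColimit (parallelPair f g) G

instance {A B} (f g : A ⟶ B) [IsReflexivePair f g] [PreservesColimitOfIsReflexivePair G] :
  PreservesColimit (parallelPair f g) G := PreservesColimitOfIsReflexivePair.out f g

instance [PreservesColimitOfIsReflexivePair G] : ∀ X : Algebra adj.toMonad,
    PreservesColimit (parallelPair (F.map X.a)
      (NatTrans.app adj.counit (F.obj X.A))) G :=
 fun _ => PreservesColimitOfIsReflexivePair.out _ _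

variable [PreservesColimitOfIsReflexivePair G]

/-- Reflexive (crude) monadicity theorem. If `G` has a right adjoint, `D` has and `G` preserves
reflexive coequalizers and `G` reflects isomorphisms, then `G` is monadic.
-/
def monadicOfHasPreservesReflexiveCoequalizersOfReflectsIsomorphisms : MonadicRightAdjoint G where
  L := F
  adj := adj
  eqv := by
    have : ∀ A : adj.toMonad.Algebra, HasCoequalizer (F.map A.a) (adj.counit.app (F.obj A.A)) :=
      fun A => HasReflexiveCoequalizers.has_coeq _ _
    have : ∀ (X : Algebra adj.toMonad), IsIso ((comparisonAdjunction adj).unit.app X) := by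
      intro X
      apply
        @isIso_of_reflects_iso _ _ _ _ _ _ _ (Monad.forget adj.toMonad) ?_ _
      · change IsIso ((comparisonAdjunction adj).unit.app X).f
        rw [comparisonAdjunction_unit_f]
        exact (IsColimit.coconePointUniqueUpToIso (beckCoequalizer X)
          (unitColimitOfPreservesCoequalizer X)).isIso_hom
    have : ∀ (Y : D), IsIso ((comparisonAdjunction adj).counit.app Y) := by
      intro Y
      rw [comparisonAdjunction_counit_app]
      -- Porting note: passing instances through
      change IsIso (IsColimit.coconePointUniqueUpToIso _ ?_).hom
      infer_instance
      -- Porting note: passing instances through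
      apply @counitCoequalizerOfReflectsCoequalizer _ _ _ _ _ _ _ _ ?_
      apply reflectsColimit_of_reflectsIsomorphisms
    exact (comparisonAdjunction adj).toEquivalence.isEquivalence_inverse

end ReflexiveMonadicity

end

end Monad2

end CategoryTheory

open CategoryTheory CategoryTheory.Limits

lemma reflectsIsos_of_faithful_exact
    {A : Type*} [Category A] [Abelian A] {B : Type*} [Category B] [Abelian B]
    (U : B ⥤ A) [PreservesFiniteLimits U] [PreservesFiniteColimits U]
    (hU : U.Faithful) : U.ReflectsIsomorphisms := by
  have := hU
  constructor
  intro X Y f hf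
  have hmono : Mono f := by
    apply Abelian.mono_of_kernel_ι_eq_zero
    apply U.zero_of_map_zero
    have h1 : kernelComparison f U ≫ kernel.ι (U.map f) = U.map (kernel.ι f) := by simp
    have : kernel.ι (U.map f) = 0 := by
      rw [← cancel_mono (U.map f)]
      simp
    rw [← h1, this, comp_zero]
  have hepi : Epi f := by
    apply Abelian.epi_of_cokernel_π_eq_zero
    apply U.zero_of_map_zero
    have h1 : cokernel.π (U.map f) ≫ cokernelComparison f U = U.map (cokernel.π f) := by simp
    have : cokernel.π (U.map f) = 0 := by
      rw [← cancel_epi (U.map f)]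
      simp
    rw [← h1, this, zero_comp]
  exact isIso_of_mono_of_epi f

/-- **Beck's monadicity theorem for abelian categories.**
Let `F : A ⥤ B` be an additive functor between abelian categories which admits a right
adjoint `U : B ⥤ A` that is exact, and let `M = UF` be the monad on `A` defined by this
adjoint pair.  Then the comparison functor `K : B ⥤ M-Mod_A` is an equivalence of
categories if and only if the functor `U` is faithful. -/
theorem monadicity_for_abelian_categories
    {A : Type*} [Category A] [Abelian A] {B : Type*} [Category B] [Abelian B]
    (F : A ⥤ B) [F.Additive] (U : B ⥤ A)
    [PreservesFiniteLimits U] [PreservesFiniteColimits U]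
    (adj : F ⊣ U) :
    (Monad.comparison adj).IsEquivalence ↔ U.Faithful := by
  constructor
  · intro h
    have : (Monad.comparison adj).Faithful := inferInstance
    have : (Monad.comparison adj ⋙ adj.toMonad.forget).Faithful := Functor.Faithful.comp _ _
    exact Functor.Faithful.of_iso (Monad.comparisonForget adj)
  · intro hU
    have := reflectsIsos_of_faithful_exact U hU
    have : Monad2.PreservesColimitOfIsReflexivePair U := by
      constructor
      intro X Y f g _
      infer_instance
    exact (Monad2.monadicOfHasPreservesReflexiveCoequalizersOfReflectsIsomorphisms adj).eqv
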